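/- arXiv:1911.08063 — 2 statements merged into one kernel-verified Lean document; each statement's English description precedes it below -/
import Mathlib

section
/- Let Γ̂ be a symmetric n × n matrix satisfying the restricted eigenvalue condition βᵀΓ̂β ≥ κ_l‖β‖₂² − τ for all β ∈ ℬ_q(2R_q), with κ_l > 0 and τ ≥ 0. Let β* ∈ ℬ_q(R_q), let Υ̂ ∈ ℝⁿ, and let β̂ ∈ ℬ_q(R_q) satisfy (1/2)β̂ᵀΓ̂β̂ − Υ̂ᵀβ̂ ≤ (1/2)β*ᵀΓ̂β* − Υ̂ᵀβ*. Then, with Δ̂ := β̂ − β*, it holds that κ_l‖Δ̂‖₂² − τ ≤ 2‖Δ̂‖₁ · ‖Υ̂ − Γ̂β*‖_∞. -/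
open Matrix

theorem basic_inequality_re {n : ℕ} (q Rq κl τ : ℝ) (hq0 : 0 ≤ q) (hq1 : q ≤ 1)
    (hκl : 0 < κl) (hτ : 0 ≤ τ)
    (Γ : Matrix (Fin n) (Fin n) ℝ) (hΓ : Γ.IsSymm) (Υ βstar βhat : Fin n → ℝ)
    (hRE : ∀ β : Fin n → ℝ, ∑ j, |β j| ^ q ≤ 2 * Rq →
      κl * ∑ j, (β j) ^ 2 - τ ≤ β ⬝ᵥ (Γ *ᵥ β))
    (hβstar : ∑ j, |βstar j| ^ q ≤ Rq) (hβhat : ∑ j, |βhat j| ^ q ≤ Rq)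
    (hopt : (1 / 2) * (βhat ⬝ᵥ (Γ *ᵥ βhat)) - Υ ⬝ᵥ βhat ≤
      (1 / 2) * (βstar ⬝ᵥ (Γ *ᵥ βstar)) - Υ ⬝ᵥ βstar) :
    κl * (∑ j, (βhat j - βstar j) ^ 2) - τ ≤
      2 * (∑ j, |βhat j - βstar j|) * ‖Υ - Γ *ᵥ βstar‖ := by
  set Δ : Fin n → ℝ := βhat - βstar with hΔdef
  have hΔj : ∀ j, Δ j = βhat j - βstar j := fun j => rfl
  -- subadditivity of rpow
  have subadd : ∀ x y : ℝ, 0 ≤ x → 0 ≤ y → (x + y) ^ q ≤ x ^ q + y ^ q := by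
    intro x y hx hy
    have h := NNReal.rpow_add_le_add_rpow x.toNNReal y.toNNReal hq0 hq1
    have := (NNReal.coe_le_coe).2 h
    simpa [NNReal.coe_rpow, Real.coe_toNNReal, hx, hy, Real.coe_toNNReal _ hx,
      Real.coe_toNNReal _ hy, Real.coe_toNNReal _ (add_nonneg hx hy)] using this
  -- Δ ∈ B_q(2 Rq)
  have hΔq : ∑ j, |Δ j| ^ q ≤ 2 * Rq := by
    have h1 : ∀ j, |Δ j| ^ q ≤ |βhat j| ^ q + |βstar j| ^ q := by
      intro j
      have habs : |Δ j| ≤ |βhat j| + |βstar j| := by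
        rw [hΔj]; exact abs_sub _ _
      calc |Δ j| ^ q ≤ (|βhat j| + |βstar j|) ^ q :=
            Real.rpow_le_rpow (abs_nonneg _) habs hq0
        _ ≤ |βhat j| ^ q + |βstar j| ^ q :=
            subadd _ _ (abs_nonneg _) (abs_nonneg _)
    calc ∑ j, |Δ j| ^ q ≤ ∑ j, (|βhat j| ^ q + |βstar j| ^ q) :=
          Finset.sum_le_sum fun j _ => h1 j
      _ = (∑ j, |βhat j| ^ q) + ∑ j, |βstar j| ^ q := Finset.sum_add_distrib
      _ ≤ Rq + Rq := add_le_add hβhat hβstar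
      _ = 2 * Rq := by ring
  have hre := hRE Δ hΔq
  -- symmetry
  have sym : ∀ x y : Fin n → ℝ, x ⬝ᵥ (Γ *ᵥ y) = y ⬝ᵥ (Γ *ᵥ x) := by
    intro x y
    rw [Matrix.dotProduct_mulVec, ← Matrix.mulVec_transpose, hΓ.eq, dotProduct_comm]
  -- quadratic expansion and optimality
  have key : Δ ⬝ᵥ (Γ *ᵥ Δ) ≤ 2 * ((Υ - Γ *ᵥ βstar) ⬝ᵥ Δ) := by
    have hexp : Δ ⬝ᵥ (Γ *ᵥ Δ) =
        βhat ⬝ᵥ (Γ *ᵥ βhat) - 2 * (βstar ⬝ᵥ (Γ *ᵥ βhat)) + βstar ⬝ᵥ (Γ *ᵥ βstar) := by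
      have : Δ ⬝ᵥ (Γ *ᵥ Δ) = βhat ⬝ᵥ (Γ *ᵥ βhat) - βhat ⬝ᵥ (Γ *ᵥ βstar)
          - βstar ⬝ᵥ (Γ *ᵥ βhat) + βstar ⬝ᵥ (Γ *ᵥ βstar) := by
        simp only [hΔdef, Matrix.mulVec_sub, sub_dotProduct, dotProduct_sub]
        ring
      rw [this, sym βhat βstar]; ring
    have hdot : (Υ - Γ *ᵥ βstar) ⬝ᵥ Δ =
        Υ ⬝ᵥ βhat - Υ ⬝ᵥ βstar - βstar ⬝ᵥ (Γ *ᵥ βhat) + βstar ⬝ᵥ (Γ *ᵥ βstar) := by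
      have h1 : (Γ *ᵥ βstar) ⬝ᵥ βhat = βstar ⬝ᵥ (Γ *ᵥ βhat) := by
        rw [dotProduct_comm, sym βhat βstar]
      have h2 : (Γ *ᵥ βstar) ⬝ᵥ βstar = βstar ⬝ᵥ (Γ *ᵥ βstar) := dotProduct_comm _ _
      simp only [hΔdef, sub_dotProduct, dotProduct_sub, h1, h2]
      ring
    rw [hexp, hdot]
    linarith
  -- dual norm bound
  have hdual : (Υ - Γ *ᵥ βstar) ⬝ᵥ Δ ≤ (∑ j, |Δ j|) * ‖Υ - Γ *ᵥ βstar‖ := by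
    set v := Υ - Γ *ᵥ βstar
    calc v ⬝ᵥ Δ = ∑ j, v j * Δ j := rfl
      _ ≤ ∑ j, |Δ j| * ‖v‖ := by
          refine Finset.sum_le_sum fun j _ => ?_
          calc v j * Δ j ≤ |v j * Δ j| := le_abs_self _
            _ = |Δ j| * |v j| := by rw [abs_mul, mul_comm]
            _ ≤ |Δ j| * ‖v‖ := by
                refine mul_le_mul_of_nonneg_left ?_ (abs_nonneg _)
                have := norm_le_pi_norm v j
                simpa [Real.norm_eq_abs] using this
      _ = (∑ j, |Δ j|) * ‖v‖ := by rw [← Finset.sum_mul]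
  have hsum1 : (∑ j, (Δ j) ^ 2) = ∑ j, (βhat j - βstar j) ^ 2 := rfl
  have hsum2 : (∑ j, |Δ j|) = ∑ j, |βhat j - βstar j| := rfl
  calc κl * (∑ j, (βhat j - βstar j) ^ 2) - τ = κl * (∑ j, (Δ j) ^ 2) - τ := by rw [hsum1]
    _ ≤ Δ ⬝ᵥ (Γ *ᵥ Δ) := hre
    _ ≤ 2 * ((Υ - Γ *ᵥ βstar) ⬝ᵥ Δ) := key
    _ ≤ 2 * ((∑ j, |Δ j|) * ‖Υ - Γ *ᵥ βstar‖) := by linarith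
    _ = 2 * (∑ j, |βhat j - βstar j|) * ‖Υ - Γ *ᵥ βstar‖ := by rw [hsum2]; ring
end

section
/- Let Δ ∈ ℝⁿ satisfy Σ_j |Δ_j|^q ≤ 2R_q with q ∈ (0, 1], and suppose κ‖Δ‖₂² ≤ λ‖Δ‖₁ + τ₀ for positive κ, λ and τ₀ ≥ 0. Then ‖Δ‖₂² ≤ √(2R_q)(λ/κ)^{1−q/2}‖Δ‖₂ + 2R_q(λ/κ)^{2−q} + τ₀/κ. -/
theorem l2_bound_lq_ball {n : ℕ} (q Rq κ lam τ₀ : ℝ) (hq0 : 0 < q) (hq1 : q ≤ 1)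
    (hκ : 0 < κ) (hlam : 0 < lam) (hτ₀ : 0 ≤ τ₀) (Δ : Fin n → ℝ)
    (hΔ : ∑ j, |Δ j| ^ q ≤ 2 * Rq)
    (h : κ * ∑ j, (Δ j) ^ 2 ≤ lam * ∑ j, |Δ j| + τ₀) :
    ∑ j, (Δ j) ^ 2 ≤
      Real.sqrt (2 * Rq) * (lam / κ) ^ (1 - q / 2) * Real.sqrt (∑ j, (Δ j) ^ 2)
        + 2 * Rq * (lam / κ) ^ (2 - q) + τ₀ / κ := by
  set t := lam / κ with ht_def
  have ht : 0 < t := div_pos hlam hκ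
  set S : Finset (Fin n) := Finset.univ.filter (fun j => t < |Δ j|) with hS_def
  have hRq : 0 ≤ 2 * Rq :=
    le_trans (Finset.sum_nonneg fun j _ => Real.rpow_nonneg (abs_nonneg _) q) hΔ
  have hsumS : ∑ j ∈ S, |Δ j| ^ q ≤ 2 * Rq := by
    refine le_trans (Finset.sum_le_sum_of_subset_of_nonneg (Finset.filter_subset _ _) ?_) hΔ
    intro j _ _; exact Real.rpow_nonneg (abs_nonneg _) q
  have hcard : (S.card : ℝ) * t ^ q ≤ 2 * Rq := by
    calc (S.card : ℝ) * t ^ q = ∑ _j ∈ S, t ^ q := by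
          rw [Finset.sum_const, nsmul_eq_mul]
      _ ≤ ∑ j ∈ S, |Δ j| ^ q := by
          refine Finset.sum_le_sum fun j hj => ?_
          have hjt : t < |Δ j| := (Finset.mem_filter.mp hj).2
          exact Real.rpow_le_rpow ht.le hjt.le hq0.le
      _ ≤ 2 * Rq := hsumS
  have hcard' : (S.card : ℝ) ≤ 2 * Rq * t ^ (-q) := by
    have htq : 0 < t ^ q := Real.rpow_pos_of_pos ht q
    rw [Real.rpow_neg ht.le, mul_comm (2 * Rq), ← div_eq_inv_mul, le_div_iff₀ htq]
    exact hcard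
  -- bound on sqrt card
  have hsqrtcard : Real.sqrt S.card ≤ Real.sqrt (2 * Rq) * t ^ (-(q / 2)) := by
    have h1 : Real.sqrt ((S.card : ℝ)) ≤ Real.sqrt (2 * Rq * t ^ (-q)) :=
      Real.sqrt_le_sqrt hcard'
    have h2 : Real.sqrt (2 * Rq * t ^ (-q)) = Real.sqrt (2 * Rq) * t ^ (-(q / 2)) := by
      rw [Real.sqrt_mul hRq, Real.sqrt_eq_rpow (t ^ (-q)), ← Real.rpow_mul ht.le,
        show -q * (1 / 2 : ℝ) = -(q / 2) by ring]
    rw [← h2]; exact h1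
  set A := ∑ j, (Δ j) ^ 2 with hA_def
  have hA0 : 0 ≤ A := Finset.sum_nonneg fun j _ => sq_nonneg _
  -- Cauchy-Schwarz on S
  have hCS : ∑ j ∈ S, |Δ j| ≤ Real.sqrt S.card * Real.sqrt A := by
    have h1 : (∑ j ∈ S, |Δ j|) ^ 2 ≤ (S.card : ℝ) * ∑ j ∈ S, |Δ j| ^ 2 := by
      exact_mod_cast sq_sum_le_card_mul_sum_sq (s := S) (f := fun j => |Δ j|)
    have h2 : ∑ j ∈ S, |Δ j| ^ 2 ≤ A := by
      rw [hA_def]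
      refine Finset.sum_le_sum_of_subset_of_nonneg (Finset.filter_subset _ _) ?_ |>.trans ?_
      · intro j _ _; exact sq_nonneg _
      · refine le_of_eq (Finset.sum_congr rfl fun j _ => ?_)
        exact sq_abs _
    have h3 : (∑ j ∈ S, |Δ j|) ^ 2 ≤ (S.card : ℝ) * A :=
      h1.trans (mul_le_mul_of_nonneg_left h2 (Nat.cast_nonneg _))
    have h4 : ∑ j ∈ S, |Δ j| ≤ Real.sqrt ((S.card : ℝ) * A) := by
      rw [← Real.sqrt_sq (Finset.sum_nonneg fun j _ => abs_nonneg _)]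
      exact Real.sqrt_le_sqrt h3
    rwa [Real.sqrt_mul (Nat.cast_nonneg _)] at h4
  -- tail bound
  have htail : ∑ j ∈ Sᶜ, |Δ j| ≤ 2 * Rq * t ^ (1 - q) := by
    have h1 : ∀ j ∈ Sᶜ, |Δ j| ≤ t ^ (1 - q) * |Δ j| ^ q := by
      intro j hj
      have hjt : |Δ j| ≤ t := by
        have := Finset.mem_compl.mp hj
        simp only [hS_def, Finset.mem_filter, Finset.mem_univ, true_and, not_lt] at this
        exact this
      rcases eq_or_lt_of_le (abs_nonneg (Δ j)) with h0 | h0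
      · rw [← h0, Real.zero_rpow hq0.ne', mul_zero]
      · calc |Δ j| = |Δ j| ^ ((1 - q) + q) := by
              rw [sub_add_cancel, Real.rpow_one]
          _ = |Δ j| ^ (1 - q) * |Δ j| ^ q := Real.rpow_add h0 _ _
          _ ≤ t ^ (1 - q) * |Δ j| ^ q := by
              refine mul_le_mul_of_nonneg_right ?_ (Real.rpow_nonneg (abs_nonneg _) q)
              exact Real.rpow_le_rpow (abs_nonneg _) hjt (by linarith)
    calc ∑ j ∈ Sᶜ, |Δ j| ≤ ∑ j ∈ Sᶜ, t ^ (1 - q) * |Δ j| ^ q :=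
          Finset.sum_le_sum h1
      _ = t ^ (1 - q) * ∑ j ∈ Sᶜ, |Δ j| ^ q := by rw [Finset.mul_sum]
      _ ≤ t ^ (1 - q) * (2 * Rq) := by
          refine mul_le_mul_of_nonneg_left ?_ (Real.rpow_nonneg ht.le _)
          refine le_trans (Finset.sum_le_sum_of_subset_of_nonneg (Finset.subset_univ _) ?_) hΔ
          intro j _ _; exact Real.rpow_nonneg (abs_nonneg _) q
      _ = 2 * Rq * t ^ (1 - q) := by ring
  -- split the l1 norm
  have hL1 : ∑ j, |Δ j| ≤ Real.sqrt S.card * Real.sqrt A + 2 * Rq * t ^ (1 - q) := by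
    rw [← Finset.sum_add_sum_compl S (fun j => |Δ j|)]
    exact add_le_add hCS htail
  -- from h
  have hmain : A ≤ t * (Real.sqrt S.card * Real.sqrt A + 2 * Rq * t ^ (1 - q)) + τ₀ / κ := by
    have := le_trans h (by linarith [mul_le_mul_of_nonneg_left hL1 hlam.le] :
      lam * ∑ j, |Δ j| + τ₀ ≤ lam * (Real.sqrt S.card * Real.sqrt A + 2 * Rq * t ^ (1 - q)) + τ₀)
    rw [← le_div_iff₀' hκ] at this
    calc A ≤ (lam * (Real.sqrt S.card * Real.sqrt A + 2 * Rq * t ^ (1 - q)) + τ₀) / κ := this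
      _ = t * (Real.sqrt S.card * Real.sqrt A + 2 * Rq * t ^ (1 - q)) + τ₀ / κ := by
          rw [ht_def]; ring
  have hpow1 : t * t ^ (-(q / 2)) = t ^ (1 - q / 2) := by
    rw [← Real.rpow_one_add' ht.le (by intro hc; nlinarith),
      show (1 : ℝ) + -(q / 2) = 1 - q / 2 by ring]
  have hpow2 : t * t ^ (1 - q) = t ^ (2 - q) := by
    rw [← Real.rpow_one_add' ht.le (by intro hc; nlinarith),
      show (1 : ℝ) + (1 - q) = 2 - q by ring]
  have hsq : 0 ≤ Real.sqrt A := Real.sqrt_nonneg _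
  calc A ≤ t * (Real.sqrt S.card * Real.sqrt A + 2 * Rq * t ^ (1 - q)) + τ₀ / κ := hmain
    _ = (t * Real.sqrt S.card) * Real.sqrt A + 2 * Rq * (t * t ^ (1 - q)) + τ₀ / κ := by ring
    _ ≤ (t * (Real.sqrt (2 * Rq) * t ^ (-(q / 2)))) * Real.sqrt A
          + 2 * Rq * (t * t ^ (1 - q)) + τ₀ / κ := by
        have := mul_le_mul_of_nonneg_left hsqrtcard ht.le
        nlinarith [mul_le_mul_of_nonneg_right this hsq]
    _ = Real.sqrt (2 * Rq) * (t * t ^ (-(q / 2))) * Real.sqrt A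
          + 2 * Rq * (t * t ^ (1 - q)) + τ₀ / κ := by ring
    _ = Real.sqrt (2 * Rq) * t ^ (1 - q / 2) * Real.sqrt A + 2 * Rq * t ^ (2 - q) + τ₀ / κ := by
        rw [hpow1, hpow2]
end
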